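/- Great collision lemma: Let S be a finite multiset of vectors in the closed unit ball of ℝ^n and κ ∈ (0, 1/2]; write K = ⌈log₂(1/κ)⌉. Then there exists a nonnegative integer ℓ ≤ K such that for every sub-multiset S' ⊆ S with |S'| ≤ |S|/(32K), if c is uniform on S and c' is uniform on S \ S', then Pr_c[ Pr_{c'}[⟨c,c'⟩ ≥ 2^ℓ κ - 2κ] ≥ 1/(2^{ℓ+5} K) ] ≥ 3/(31K). -/

import Mathlib

open scoped RealInnerProductSpace
open Finset

set_option maxHeartbeats 2000000 in
theorem stmt_4 (n N : ℕ) (hN : 0 < N) (v : Fin N → EuclideanSpace ℝ (Fin n))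
    (hball : ∀ a, ‖v a‖ ≤ 1) (κ : ℝ) (hκ0 : 0 < κ) (hκ1 : κ ≤ 1/2)
    (K : ℝ) (hK : K = ((⌈Real.logb 2 (1/κ)⌉ : ℤ) : ℝ)) :
    ∃ ℓ : ℕ, (ℓ : ℝ) ≤ K ∧
      ∀ S' : Finset (Fin N), (S'.card : ℝ) ≤ (N : ℝ) / (32 * K) →
        (Nat.card {c : Fin N //
            (Nat.card {c' : Fin N // c' ∉ S' ∧ ⟪v c, v c'⟫ ≥ 2^ℓ * κ - 2*κ} : ℝ)
              / ((N : ℝ) - S'.card) ≥ 1 / (2^(ℓ+5) * K)} : ℝ) / (N : ℝ)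
          ≥ 3 / (31 * K) := by
  classical
  by_contra hcon
  push_neg at hcon
  -- basic numeric facts
  have hNpos : (0:ℝ) < N := by exact_mod_cast hN
  have hN1 : (1:ℝ) ≤ N := by exact_mod_cast hN
  have hL1 : 1 ≤ Real.logb 2 (1/κ) := by
    rw [Real.le_logb_iff_rpow_le one_lt_two (by positivity), Real.rpow_one,
      le_div_iff₀ hκ0]
    linarith
  have hceilR : (1:ℝ) ≤ ((⌈Real.logb 2 (1/κ)⌉ : ℤ) : ℝ) :=
    le_trans hL1 (Int.le_ceil _)
  have hceil : (1:ℤ) ≤ ⌈Real.logb 2 (1/κ)⌉ := by exact_mod_cast hceilR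
  set K₀ : ℕ := (⌈Real.logb 2 (1/κ)⌉).toNat with hK₀def
  have hKcast : (K₀ : ℝ) = K := by
    rw [hK, hK₀def]
    norm_cast
    exact Int.toNat_of_nonneg (by linarith)
  have hK1 : (1:ℝ) ≤ K := by rw [hK]; exact hceilR
  have hKpos : (0:ℝ) < K := by linarith
  have hK01 : 1 ≤ K₀ := by
    have : (1:ℝ) ≤ (K₀:ℝ) := by rw [hKcast]; exact hK1
    exact_mod_cast this
  have hlogK : Real.logb 2 (1/κ) ≤ (K₀:ℝ) := by
    rw [hKcast, hK]; exact Int.le_ceil _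
  have hpow2 : (1:ℝ) ≤ 2^K₀ * κ := by
    have h1 : (1/κ) ≤ (2:ℝ) ^ (K₀:ℝ) := by
      calc (1/κ) = (2:ℝ) ^ Real.logb 2 (1/κ) :=
            (Real.rpow_logb two_pos (by norm_num) (by positivity)).symm
      _ ≤ (2:ℝ) ^ (K₀:ℝ) := Real.rpow_le_rpow_of_exponent_le one_le_two hlogK
    rw [Real.rpow_natCast] at h1
    rw [div_le_iff₀ hκ0] at h1
    linarith
  -- choose the adversarial sets
  have h2 : ∀ ℓ : ℕ, ∃ S' : Finset (Fin N), ((ℓ:ℝ) ≤ K →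
      ((S'.card : ℝ) ≤ (N : ℝ) / (32 * K) ∧
      (Nat.card {c : Fin N //
          (Nat.card {c' : Fin N // c' ∉ S' ∧ ⟪v c, v c'⟫ ≥ 2^ℓ * κ - 2*κ} : ℝ)
            / ((N : ℝ) - S'.card) ≥ 1 / (2^(ℓ+5) * K)} : ℝ) / (N : ℝ)
        < 3 / (31 * K))) := by
    intro ℓ
    by_cases hℓ : (ℓ:ℝ) ≤ K
    · obtain ⟨S', h1, h2⟩ := hcon ℓ hℓ
      exact ⟨S', fun _ => ⟨h1, h2⟩⟩
    · exact ⟨∅, fun h => absurd h hℓ⟩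
  choose S hS using h2
  have hcardsub : ∀ (p : Fin N → Prop), (Nat.card {x : Fin N // p x}) = (univ.filter p).card := by
    intro p; rw [Nat.card_eq_fintype_card, Fintype.card_subtype]
  -- good sets
  set G : ℕ → Finset (Fin N) := fun ℓ => univ.filter (fun c =>
    (Nat.card {c' : Fin N // c' ∉ S ℓ ∧ ⟪v c, v c'⟫ ≥ 2^ℓ * κ - 2*κ} : ℝ)
      / ((N : ℝ) - (S ℓ).card) ≥ 1 / (2^(ℓ+5) * K)) with hGdef
  have hℓK : ∀ ℓ ∈ range (K₀+1), (ℓ:ℝ) ≤ K := by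
    intro ℓ hℓ
    rw [← hKcast]
    exact_mod_cast Nat.lt_succ_iff.mp (mem_range.mp hℓ)
  have hGcard : ∀ ℓ ∈ range (K₀+1), ((G ℓ).card : ℝ) ≤ 3 / (31*K) * N := by
    intro ℓ hℓ
    have h := (hS ℓ (hℓK ℓ hℓ)).2
    rw [hcardsub, div_lt_iff₀ hNpos] at h
    rw [hGdef]
    have : (filter (fun c =>
        (Nat.card {c' : Fin N // c' ∉ S ℓ ∧ ⟪v c, v c'⟫ ≥ 2^ℓ * κ - 2*κ} : ℝ)
          / ((N : ℝ) - (S ℓ).card) ≥ 1 / (2^(ℓ+5) * K)) univ).card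
        = (filter (fun c =>
        (Nat.card {c' : Fin N // c' ∉ S ℓ ∧ ⟪v c, v c'⟫ ≥ 2^ℓ * κ - 2*κ} : ℝ)
          / ((N : ℝ) - (S ℓ).card) ≥ 1 / (2^(ℓ+5) * K)) univ).card := rfl
    exact le_of_lt (by convert h using 3)
  have hScard : ∀ ℓ ∈ range (K₀+1), ((S ℓ).card : ℝ) ≤ (N:ℝ)/(32*K) :=
    fun ℓ hℓ => (hS ℓ (hℓK ℓ hℓ)).1
  -- the big bad set W
  set A : Finset (Fin N) := (range (K₀+1)).biUnion (fun ℓ => S ℓ ∪ G ℓ) with hAdef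
  set W : Finset (Fin N) := univ \ A with hWdef
  set w : ℝ := (W.card : ℝ) with hwdef
  -- lower bound on |W|
  have hAcard : (A.card : ℝ) ≤ ((K₀:ℝ)+1) * ((N:ℝ)/(32*K) + 3/(31*K)*N) := by
    have h1 : A.card ≤ ∑ ℓ ∈ range (K₀+1), (S ℓ ∪ G ℓ).card := card_biUnion_le
    have h2 : ((∑ ℓ ∈ range (K₀+1), (S ℓ ∪ G ℓ).card : ℕ) : ℝ)
        ≤ ∑ ℓ ∈ range (K₀+1), (((S ℓ).card : ℝ) + ((G ℓ).card : ℝ)) := by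
      push_cast
      apply sum_le_sum
      intro ℓ _
      exact_mod_cast card_union_le _ _
    have h3 : ∑ ℓ ∈ range (K₀+1), (((S ℓ).card : ℝ) + ((G ℓ).card : ℝ))
        ≤ ∑ ℓ ∈ range (K₀+1), ((N:ℝ)/(32*K) + 3/(31*K)*N) := by
      apply sum_le_sum
      intro ℓ hℓ
      exact add_le_add (hScard ℓ hℓ) (hGcard ℓ hℓ)
    rw [sum_const, card_range, nsmul_eq_mul] at h3
    push_cast at h3
    calc (A.card : ℝ) ≤ _ := by exact_mod_cast h1
      _ ≤ _ := h2
      _ ≤ _ := h3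
  have hwN : w = (N:ℝ) - A.card := by
    rw [hwdef, hWdef, card_sdiff_of_subset (subset_univ A), card_univ, Fintype.card_fin]
    have hle : A.card ≤ N := by
      calc A.card ≤ univ.card := card_le_card (subset_univ A)
        _ = N := by rw [card_univ, Fintype.card_fin]
    push_cast [Nat.cast_sub hle]
    ring
  have hK02K : ((K₀:ℝ)+1) ≤ 2*K := by
    rw [← hKcast]
    have : (1:ℝ) ≤ (K₀:ℝ) := by exact_mod_cast hK01
    linarith
  have hW : w ≥ 369/496 * N := by
    have hb : (0:ℝ) ≤ (N:ℝ)/(32*K) + 3/(31*K)*N := by positivity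
    have h4 : ((K₀:ℝ)+1) * ((N:ℝ)/(32*K) + 3/(31*K)*N) ≤ 2*K * ((N:ℝ)/(32*K) + 3/(31*K)*N) :=
      mul_le_mul_of_nonneg_right hK02K hb
    have h5 : 2*K * ((N:ℝ)/(32*K) + 3/(31*K)*N) = (N:ℝ)/16 + 6*N/31 := by
      field_simp
      ring
    rw [hwN]
    rw [h5] at h4
    linarith [hAcard, h4]
  -- the key per-row estimate
  have hkey : ∀ c ∈ W, ∑ c' ∈ W, ⟪v c, v c'⟫ ≤ -κ * w + κ * N / 8 := by
    intro c hc
    have hcA : c ∉ A := (mem_sdiff.mp hc).2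
    -- counting bound at each level
    have hcount : ∀ ℓ ∈ range (K₀+1),
        ((W.filter (fun c' => ⟪v c, v c'⟫ ≥ 2^ℓ * κ - 2*κ)).card : ℝ)
          ≤ (N:ℝ) / (2^(ℓ+5) * K) := by
      intro ℓ hℓ
      have hcG : c ∉ G ℓ := fun h => hcA (mem_biUnion.mpr ⟨ℓ, hℓ, mem_union_right _ h⟩)
      have hnot : ¬ ((Nat.card {c' : Fin N // c' ∉ S ℓ ∧ ⟪v c, v c'⟫ ≥ 2^ℓ * κ - 2*κ} : ℝ)
          / ((N : ℝ) - (S ℓ).card) ≥ 1 / (2^(ℓ+5) * K)) := by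
        intro h
        exact hcG (by rw [hGdef]; exact mem_filter.mpr ⟨mem_univ _, h⟩)
      rw [not_le] at hnot
      have hD : (0:ℝ) < (N:ℝ) - (S ℓ).card := by
        have h1 := hScard ℓ hℓ
        have h2 : (N:ℝ)/(32*K) ≤ (N:ℝ)/32 := by
          apply div_le_div_of_nonneg_left hNpos.le (by norm_num)
          linarith
        linarith
      rw [div_lt_iff₀ hD] at hnot
      have hmono : ((W.filter (fun c' => ⟪v c, v c'⟫ ≥ 2^ℓ * κ - 2*κ)).card : ℝ)
          ≤ (Nat.card {c' : Fin N // c' ∉ S ℓ ∧ ⟪v c, v c'⟫ ≥ 2^ℓ * κ - 2*κ} : ℝ) := by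
        rw [hcardsub]
        have hsub : W.filter (fun c' => ⟪v c, v c'⟫ ≥ 2^ℓ * κ - 2*κ)
            ⊆ filter (fun c' => c' ∉ S ℓ ∧ ⟪v c, v c'⟫ ≥ 2^ℓ * κ - 2*κ)
              (univ : Finset (Fin N)) := by
          intro x hx
          simp only [mem_filter] at hx ⊢
          refine ⟨mem_univ _, ?_, hx.2⟩
          intro hxS
          exact (mem_sdiff.mp hx.1).2 (mem_biUnion.mpr ⟨ℓ, hℓ, mem_union_left _ hxS⟩)
        exact_mod_cast card_le_card hsub
      have hDN : (N:ℝ) - (S ℓ).card ≤ N := by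
        have : (0:ℝ) ≤ ((S ℓ).card : ℝ) := Nat.cast_nonneg _
        linarith
      have hx5 : (0:ℝ) < 2^(ℓ+5) * K := by positivity
      refine le_of_lt ?_
      calc ((W.filter (fun c' => ⟪v c, v c'⟫ ≥ 2^ℓ * κ - 2*κ)).card : ℝ)
          ≤ _ := hmono
        _ < 1 / (2^(ℓ+5) * K) * ((N:ℝ) - (S ℓ).card) := hnot
        _ ≤ (N:ℝ) / (2^(ℓ+5) * K) := by
            rw [one_div, inv_mul_eq_div]
            gcongr
    -- pointwise layer-cake bound
    have hpt : ∀ c' : Fin N, ⟪v c, v c'⟫ ≤ -κ + ∑ ℓ ∈ range (K₀+1),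
        2^(ℓ+1) * κ * (if ⟪v c, v c'⟫ ≥ 2^ℓ * κ - 2*κ then 1 else 0) := by
      intro c'
      have hx1 : ⟪v c, v c'⟫ ≤ 1 := by
        have h1 := real_inner_le_norm (v c) (v c')
        nlinarith [hball c, hball c', norm_nonneg (v c), norm_nonneg (v c')]
      have hterm : ∀ ℓ ∈ range (K₀+1),
          (0:ℝ) ≤ 2^(ℓ+1) * κ * (if ⟪v c, v c'⟫ ≥ 2^ℓ * κ - 2*κ then 1 else 0) := by
        intro ℓ _
        split_ifs <;> positivity
      by_cases hx0 : ⟪v c, v c'⟫ ≥ 2^(0:ℕ) * κ - 2*κ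
      · have hPK : ⟪v c, v c'⟫ + κ ≤ 2^(K₀+1) * κ := by
          have he : (2:ℝ)^(K₀+1) * κ = 2 * (2^K₀ * κ) := by ring
          rw [he]
          linarith
        have hex : ∃ m : ℕ, ⟪v c, v c'⟫ + κ ≤ 2^(m+1) * κ := ⟨K₀, hPK⟩
        have hspec : ⟪v c, v c'⟫ + κ ≤ 2^(Nat.find hex + 1) * κ := Nat.find_spec hex
        have hl0le : Nat.find hex ≤ K₀ := Nat.find_min' hex hPK
        have hfire : ⟪v c, v c'⟫ ≥ 2^(Nat.find hex) * κ - 2*κ := by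
          rcases eq_or_ne (Nat.find hex) 0 with h0 | hne
          · rw [h0]; exact hx0
          · obtain ⟨m, hm⟩ := Nat.exists_eq_succ_of_ne_zero hne
            have hmin : ¬ (⟪v c, v c'⟫ + κ ≤ 2^(m+1) * κ) :=
              Nat.find_min hex (by omega)
            push_neg at hmin
            rw [hm]
            simp only [Nat.succ_eq_add_one]
            have h0κ : (0:ℝ) ≤ κ := hκ0.le
            linarith [hmin]
        have hmem : Nat.find hex ∈ range (K₀+1) := mem_range.mpr (by omega)
        have hsingle := single_le_sum hterm hmem
        rw [if_pos hfire, mul_one] at hsingle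
        linarith
      · push_neg at hx0
        have hsum : (0:ℝ) ≤ ∑ ℓ ∈ range (K₀+1),
            2^(ℓ+1) * κ * (if ⟪v c, v c'⟫ ≥ 2^ℓ * κ - 2*κ then 1 else 0) :=
          sum_nonneg hterm
        have he : (2:ℝ)^(0:ℕ) * κ - 2*κ = -κ := by ring
        rw [he] at hx0
        linarith
    -- combine
    calc ∑ c' ∈ W, ⟪v c, v c'⟫
        ≤ ∑ c' ∈ W, (-κ + ∑ ℓ ∈ range (K₀+1),
            2^(ℓ+1) * κ * (if ⟪v c, v c'⟫ ≥ 2^ℓ * κ - 2*κ then 1 else 0)) :=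
          sum_le_sum (fun c' _ => hpt c')
      _ = -κ * w + ∑ ℓ ∈ range (K₀+1), 2^(ℓ+1) * κ *
            ((W.filter (fun c' => ⟪v c, v c'⟫ ≥ 2^ℓ * κ - 2*κ)).card : ℝ) := by
          rw [sum_add_distrib, sum_const, nsmul_eq_mul, sum_comm]
          congr 1
          · rw [hwdef]; ring
          · apply sum_congr rfl
            intro ℓ _
            rw [← mul_sum, sum_boole]
      _ ≤ -κ * w + ∑ ℓ ∈ range (K₀+1), 2^(ℓ+1) * κ * ((N:ℝ) / (2^(ℓ+5) * K)) := by
          apply add_le_add_right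
          apply sum_le_sum
          intro ℓ hℓ
          exact mul_le_mul_of_nonneg_left (hcount ℓ hℓ) (by positivity)
      _ = -κ * w + ∑ ℓ ∈ range (K₀+1), κ * N / (16 * K) := by
          congr 1
          apply sum_congr rfl
          intro ℓ _
          have he : (2:ℝ)^(ℓ+5) = 2^(ℓ+1) * 2^4 := by rw [← pow_add]
          rw [he]
          have h2ℓ : (0:ℝ) < 2^(ℓ+1) := by positivity
          field_simp
          ring
      _ = -κ * w + ((K₀:ℝ)+1) * (κ * N / (16 * K)) := by
          rw [sum_const, card_range, nsmul_eq_mul]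
          push_cast
          ring
      _ ≤ -κ * w + κ * N / 8 := by
          have hb : (0:ℝ) ≤ κ * N / (16 * K) := by positivity
          have h4 : ((K₀:ℝ)+1) * (κ * N / (16 * K)) ≤ 2*K * (κ * N / (16 * K)) :=
            mul_le_mul_of_nonneg_right hK02K hb
          have h5 : 2*K * (κ * N / (16 * K)) = κ * N / 8 := by
            field_simp
            ring
          rw [h5] at h4
          linarith
  -- positivity of the Gram sum
  have hdouble : (0:ℝ) ≤ ∑ c ∈ W, ∑ c' ∈ W, ⟪v c, v c'⟫ := by
    have h := real_inner_self_nonneg (x := ∑ c ∈ W, v c)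
    rw [sum_inner] at h
    convert h using 1
    apply sum_congr rfl
    intro c _
    rw [inner_sum]
  have hfin : ∑ c ∈ W, ∑ c' ∈ W, ⟪v c, v c'⟫ ≤ w * (-κ * w + κ * N / 8) := by
    calc ∑ c ∈ W, ∑ c' ∈ W, ⟪v c, v c'⟫
        ≤ ∑ _c ∈ W, (-κ * w + κ * N / 8) := sum_le_sum hkey
      _ = w * (-κ * w + κ * N / 8) := by rw [sum_const, nsmul_eq_mul, hwdef]
  have hwlow : (369:ℝ)/496 * N ≤ w := hW
  have hwpos : (0:ℝ) < w := lt_of_lt_of_le (by positivity) hwlow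
  nlinarith [mul_pos hκ0 hwpos, mul_pos (mul_pos hκ0 hwpos) hwpos,
    mul_pos hκ0 (mul_pos hwpos hNpos)]
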